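/- There exists a unit vector |Ψ⟩ in C² ⊗ C² and pairs of projections (P^α_1, P^α_2) on the first factor and (P^β_1, P^β_2) on the second factor such that no probability measure on {0,1}⁴ reproduces all four pairwise distributions ⟨Ψ|(P^α_i ⊗ P^β_j)|Ψ⟩ as marginals (violation of the CHSH/classical joint-distribution constraint). -/

import Mathlib

open scoped ComplexConjugate

/-- Elementary tensor of two vectors. -/
noncomputable def tens {m n : ℕ} (a : EuclideanSpace ℂ (Fin m)) (b : EuclideanSpace ℂ (Fin n)) :
    EuclideanSpace ℂ (Fin m × Fin n) :=
  WithLp.toLp 2 (fun p : Fin m × Fin n => a p.1 * b p.2)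

/-- Outer product |ψ⟩⟨ψ| as a matrix. -/
noncomputable def outer {ι : Type*} [Fintype ι] (ψ : EuclideanSpace ℂ ι) : Matrix ι ι ℂ :=
  fun p q => ψ p * conj (ψ q)

/-- Kronecker (tensor) product of operators. -/
noncomputable def kron {m n : ℕ} (A : Matrix (Fin m) (Fin m) ℂ) (B : Matrix (Fin n) (Fin n) ℂ) :
    Matrix (Fin m × Fin n) (Fin m × Fin n) ℂ :=
  fun p q => A p.1 q.1 * B p.2 q.2

/-- Partial trace over the second factor. -/
noncomputable def ptraceB {m n : ℕ} (M : Matrix (Fin m × Fin n) (Fin m × Fin n) ℂ) :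
    Matrix (Fin m) (Fin m) ℂ :=
  fun i j => ∑ k, M (i, k) (j, k)

/-- Partial trace over the first factor. -/
noncomputable def ptraceA {m n : ℕ} (M : Matrix (Fin m × Fin n) (Fin m × Fin n) ℂ) :
    Matrix (Fin n) (Fin n) ℂ :=
  fun i j => ∑ k, M (k, i) (k, j)

/-- Expectation value ⟨ψ| M |ψ⟩. -/
noncomputable def expect {ι : Type*} [Fintype ι] (M : Matrix ι ι ℂ) (ψ : EuclideanSpace ℂ ι) : ℂ :=
  ∑ p, conj (ψ p) * M.mulVec ψ p


/-- If `s = true` this is the projection `P`, otherwise its complement `1 - P`. -/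
noncomputable def projVal {m : ℕ} (P : Matrix (Fin m) (Fin m) ℂ) (s : Bool) :
    Matrix (Fin m) (Fin m) ℂ :=
  if s then P else 1 - P

/-- The Bell state (|00⟩ + |11⟩)/√2. -/
noncomputable def Psi0 : EuclideanSpace ℂ (Fin 2 × Fin 2) :=
  WithLp.toLp 2 (fun p : Fin 2 × Fin 2 => if p.1 = p.2 then ((Real.sqrt 2)⁻¹ : ℝ) else 0)

/-- Alice's two projections. -/
noncomputable def MA : Fin 2 → Matrix (Fin 2) (Fin 2) ℂ :=
  ![!![1,0;0,0], !![1/2,1/2;1/2,1/2]]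

/-- Bob's two projections. -/
noncomputable def MB : Fin 2 → Matrix (Fin 2) (Fin 2) ℂ :=
  ![!![4/5,2/5;2/5,1/5], !![4/5,-2/5;-2/5,1/5]]

lemma expect_kron (A B : Matrix (Fin 2) (Fin 2) ℂ) :
    expect (kron A B) Psi0 =
      (A 0 0 * B 0 0 + A 0 1 * B 0 1 + A 1 0 * B 1 0 + A 1 1 * B 1 1) / 2 := by
  have hc : ((Real.sqrt 2 : ℝ) : ℂ)⁻¹ * ((Real.sqrt 2 : ℝ) : ℂ)⁻¹ = 1/2 := by
    rw [← mul_inv, ← Complex.ofReal_mul,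
      Real.mul_self_sqrt (by norm_num : (0:ℝ) ≤ 2)]
    norm_num
  simp only [expect, Matrix.mulVec, dotProduct, Fintype.sum_prod_type, Fin.sum_univ_two,
    Psi0, kron, Complex.conj_ofReal, PiLp.toLp_apply]
  norm_num
  linear_combination (A 0 0 * B 0 0 + A 0 1 * B 0 1 + A 1 0 * B 1 0 + A 1 1 * B 1 1) * hc

/-- CHSH-type violation: there are a state on ℂ² ⊗ ℂ² and two projections on each
factor such that no classical probability distribution on the four {0,1}-valued
outcomes reproduces all four quantum pairwise distributions as marginals. -/
theorem no_joint_distribution_for_quantum_correlations :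
    ∃ (Psi : EuclideanSpace ℂ (Fin 2 × Fin 2))
      (Pa Pb : Fin 2 → Matrix (Fin 2) (Fin 2) ℂ),
      ‖Psi‖ = 1 ∧
      (∀ i, (Pa i).IsHermitian ∧ Pa i * Pa i = Pa i) ∧
      (∀ j, (Pb j).IsHermitian ∧ Pb j * Pb j = Pb j) ∧
      ¬ ∃ f : ((Fin 2 → Bool) × (Fin 2 → Bool)) → ℝ,
        (∀ x, 0 ≤ f x) ∧ (∑ x, f x = 1) ∧
        (∀ (i j : Fin 2) (s t : Bool),
          ∑ x ∈ Finset.univ.filter (fun x : (Fin 2 → Bool) × (Fin 2 → Bool) =>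
              x.1 i = s ∧ x.2 j = t), f x =
            (expect (kron (projVal (Pa i) s) (projVal (Pb j) t)) Psi).re) := by
  refine ⟨Psi0, MA, MB, ?_, ?_, ?_, ?_⟩
  · rw [EuclideanSpace.norm_eq, Fintype.sum_prod_type]
    simp [Psi0, Fin.sum_univ_two, Complex.norm_real]
    norm_num
  · intro i
    fin_cases i <;> constructor <;>
      · ext p q
        fin_cases p <;> fin_cases q <;>
          simp [MA, Matrix.IsHermitian, Matrix.conjTranspose_apply, Matrix.mul_apply,
            Fin.sum_univ_two] <;> norm_num
  · intro j
    fin_cases j <;> constructor <;>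
      · ext p q
        fin_cases p <;> fin_cases q <;>
          simp [MB, Matrix.IsHermitian, Matrix.conjTranspose_apply, Matrix.mul_apply,
            Fin.sum_univ_two] <;> norm_num
  · rintro ⟨f, hnn, hsum, hm⟩
    -- From the marginal conditions, the correlators are determined.
    have key : ∀ (i j : Fin 2) (v : ℝ),
        ((expect (kron (projVal (MA i) true) (projVal (MB j) true)) Psi0).re
        + (expect (kron (projVal (MA i) false) (projVal (MB j) false)) Psi0).re
        - (expect (kron (projVal (MA i) true) (projVal (MB j) false)) Psi0).re
        - (expect (kron (projVal (MA i) false) (projVal (MB j) true)) Psi0).re = v) →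
        ∑ x : (Fin 2 → Bool) × (Fin 2 → Bool),
          f x * (if x.1 i then (1:ℝ) else -1) * (if x.2 j then (1:ℝ) else -1) = v := by
      intro i j v hv
      rw [← hm i j true true, ← hm i j false false, ← hm i j true false,
        ← hm i j false true] at hv
      rw [← hv]
      simp only [Finset.sum_filter]
      rw [← Finset.sum_add_distrib, ← Finset.sum_sub_distrib, ← Finset.sum_sub_distrib]
      apply Finset.sum_congr rfl
      intro x _
      cases hx1 : x.1 i <;> cases hx2 : x.2 j <;> simp [hx1, hx2]
    have e00 := key 0 0 (3/5) (by
      norm_num [expect_kron, projVal, MA, MB, Matrix.one_apply, Matrix.sub_apply,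
        Complex.div_re, Complex.add_re, Complex.sub_re, Complex.mul_re, Complex.one_re])
    have e01 := key 0 1 (3/5) (by
      norm_num [expect_kron, projVal, MA, MB, Matrix.one_apply, Matrix.sub_apply,
        Complex.div_re, Complex.add_re, Complex.sub_re, Complex.mul_re, Complex.one_re])
    have e10 := key 1 0 (4/5) (by
      norm_num [expect_kron, projVal, MA, MB, Matrix.one_apply, Matrix.sub_apply,
        Complex.div_re, Complex.add_re, Complex.sub_re, Complex.mul_re, Complex.one_re])
    have e11 := key 1 1 (-(4/5)) (by
      norm_num [expect_kron, projVal, MA, MB, Matrix.one_apply, Matrix.sub_apply,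
        Complex.div_re, Complex.add_re, Complex.sub_re, Complex.mul_re, Complex.one_re])
    -- CHSH sum
    have hS : ∑ x : (Fin 2 → Bool) × (Fin 2 → Bool),
        f x * ((if x.1 0 then (1:ℝ) else -1) * (if x.2 0 then (1:ℝ) else -1)
             + (if x.1 0 then (1:ℝ) else -1) * (if x.2 1 then (1:ℝ) else -1)
             + (if x.1 1 then (1:ℝ) else -1) * (if x.2 0 then (1:ℝ) else -1)
             - (if x.1 1 then (1:ℝ) else -1) * (if x.2 1 then (1:ℝ) else -1)) = 14/5 := by
      have expand : ∑ x : (Fin 2 → Bool) × (Fin 2 → Bool),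
          f x * ((if x.1 0 then (1:ℝ) else -1) * (if x.2 0 then (1:ℝ) else -1)
               + (if x.1 0 then (1:ℝ) else -1) * (if x.2 1 then (1:ℝ) else -1)
               + (if x.1 1 then (1:ℝ) else -1) * (if x.2 0 then (1:ℝ) else -1)
               - (if x.1 1 then (1:ℝ) else -1) * (if x.2 1 then (1:ℝ) else -1))
        = (∑ x : (Fin 2 → Bool) × (Fin 2 → Bool),
            f x * (if x.1 0 then (1:ℝ) else -1) * (if x.2 0 then (1:ℝ) else -1))
        + (∑ x : (Fin 2 → Bool) × (Fin 2 → Bool),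
            f x * (if x.1 0 then (1:ℝ) else -1) * (if x.2 1 then (1:ℝ) else -1))
        + (∑ x : (Fin 2 → Bool) × (Fin 2 → Bool),
            f x * (if x.1 1 then (1:ℝ) else -1) * (if x.2 0 then (1:ℝ) else -1))
        - (∑ x : (Fin 2 → Bool) × (Fin 2 → Bool),
            f x * (if x.1 1 then (1:ℝ) else -1) * (if x.2 1 then (1:ℝ) else -1)) := by
        rw [← Finset.sum_add_distrib, ← Finset.sum_add_distrib, ← Finset.sum_sub_distrib]
        apply Finset.sum_congr rfl
        intro x _
        ring
      rw [expand, e00, e01, e10, e11]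
      norm_num
    -- pointwise CHSH bound
    have hb : ∀ x : (Fin 2 → Bool) × (Fin 2 → Bool),
        f x * ((if x.1 0 then (1:ℝ) else -1) * (if x.2 0 then (1:ℝ) else -1)
             + (if x.1 0 then (1:ℝ) else -1) * (if x.2 1 then (1:ℝ) else -1)
             + (if x.1 1 then (1:ℝ) else -1) * (if x.2 0 then (1:ℝ) else -1)
             - (if x.1 1 then (1:ℝ) else -1) * (if x.2 1 then (1:ℝ) else -1)) ≤ 2 * f x := by
      intro x
      have hx := hnn x
      cases h1 : x.1 0 <;> cases h2 : x.1 1 <;> cases h3 : x.2 0 <;> cases h4 : x.2 1 <;>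
        simp [h1, h2, h3, h4] <;> linarith
    have hle : (14/5 : ℝ) ≤ 2 := by
      calc (14/5 : ℝ) = _ := hS.symm
        _ ≤ ∑ x : (Fin 2 → Bool) × (Fin 2 → Bool), 2 * f x :=
          Finset.sum_le_sum (fun x _ => hb x)
        _ = 2 := by rw [← Finset.mul_sum, hsum, mul_one]
    norm_num at hle
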